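/- With D constructed from K_{2n} as above, every perfect matching M of K_{2n} extends to a perfect matching M* of D consisting of the crossing edges {[u,v],[v,u]} for {u,v} ∈ M together with, in each cycle C^v, the unique perfect matching of the path obtained by deleting the vertex [v, M(v)] (where M(v) is the vertex matched to v by M). -/

import Mathlib

/-- Vertices of the graph `D`: pairs `[v,u]` with `v ≠ u` of vertices of `K_{2n}`. -/
abbrev Vt (n : ℕ) := {p : Fin (2*n) × Fin (2*n) // p.1 ≠ p.2}

/-- The graph `D` obtained from `K_{2n}` by replacing each vertex `v` by a cycle `C^v`
of length `2n-1` on the vertices `[v,u]` (`u ≠ v`), whose cyclic order is given by the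
permutation `σ v` (a cycle fixing exactly `v`), and adding the crossing edge
`{[v,u],[u,v]}` for every edge `{u,v}` of `K_{2n}`. -/
def matchGraph (n : ℕ) (σ : Fin (2*n) → Equiv.Perm (Fin (2*n))) : SimpleGraph (Vt n) :=
  SimpleGraph.fromRel (fun a b =>
    (a.1.1 = b.1.2 ∧ a.1.2 = b.1.1) ∨ (a.1.1 = b.1.1 ∧ σ a.1.1 a.1.2 = b.1.2))

namespace Stmt8Aux

structure Good (n : ℕ) (σ : Fin (2*n) → Equiv.Perm (Fin (2*n)))
    (f : Fin (2*n) → Fin (2*n)) : Prop where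
  hn : 2 ≤ n
  hfix : ∀ v u, σ v u = u ↔ u = v
  hcyc : ∀ v, (σ v).IsCycle
  hf1 : ∀ v, f v ≠ v
  hf2 : ∀ v, f (f v) = v

variable {n : ℕ} {σ : Fin (2*n) → Equiv.Perm (Fin (2*n))} {f : Fin (2*n) → Fin (2*n)}

theorem Good.nfix (H : Good n σ f) {v u : Fin (2*n)} (hu : u ≠ v) : σ v u ≠ u :=
  fun h => hu ((H.hfix v u).mp h)

theorem Good.ne_v (H : Good n σ f) {v u : Fin (2*n)} (hu : u ≠ v) : σ v u ≠ v := by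
  intro h
  exact hu ((σ v).injective (h.trans ((H.hfix v v).mpr rfl).symm))

theorem perm_apply_inv_self {α : Type*} (e : Equiv.Perm α) (x : α) : e (e⁻¹ x) = x :=
  e.apply_symm_apply x

theorem perm_inv_apply_self {α : Type*} (e : Equiv.Perm α) (x : α) : e⁻¹ (e x) = x :=
  e.symm_apply_apply x

theorem Good.inv_ne_v (H : Good n σ f) {v u : Fin (2*n)} (hu : u ≠ v) : (σ v)⁻¹ u ≠ v := by
  intro h
  apply hu
  have : σ v ((σ v)⁻¹ u) = σ v v := congrArg (σ v) h
  rwa [perm_apply_inv_self, (H.hfix v v).mpr rfl] at this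

theorem Good.exists_pow (H : Good n σ f) (v : Fin (2*n)) {u : Fin (2*n)} (hu : u ≠ v) :
    ∃ k : ℕ, ((σ v) ^ k) (f v) = u :=
  (H.hcyc v).exists_pow_eq (H.nfix (H.hf1 v)) (H.nfix hu)

/-- discrete log along the cycle `σ v` starting from `f v`. -/
def Good.d (H : Good n σ f) (v u : Fin (2*n)) : ℕ :=
  if hu : u ≠ v then Nat.find (H.exists_pow v hu) else 0

theorem Good.d_spec (H : Good n σ f) {v u : Fin (2*n)} (hu : u ≠ v) :
    ((σ v) ^ H.d v u) (f v) = u := by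
  rw [Good.d, dif_pos hu]; exact Nat.find_spec (H.exists_pow v hu)

theorem Good.d_min (H : Good n σ f) {v u : Fin (2*n)} (hu : u ≠ v) {k : ℕ}
    (hk : ((σ v) ^ k) (f v) = u) : H.d v u ≤ k := by
  rw [Good.d, dif_pos hu]; exact Nat.find_min' _ hk

theorem Good.d_eq_zero (H : Good n σ f) {v u : Fin (2*n)} (hu : u ≠ v) :
    H.d v u = 0 ↔ u = f v := by
  constructor
  · intro h
    have := H.d_spec hu
    rw [h, pow_zero] at this
    exact this.symm
  · intro h
    have : ((σ v) ^ 0) (f v) = u := by rw [pow_zero]; exact h.symm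
    exact Nat.le_zero.mp (H.d_min hu this)

theorem Good.orderOf_eq (H : Good n σ f) (v : Fin (2*n)) : orderOf (σ v) = 2*n - 1 := by
  have hs : (σ v).support = Finset.univ.erase v := by
    ext u
    simp only [Equiv.Perm.mem_support, Finset.mem_erase, Finset.mem_univ, and_true]
    rw [not_iff_comm, not_not, H.hfix]
  rw [(H.hcyc v).orderOf, hs, Finset.card_erase_of_mem (Finset.mem_univ v),
    Finset.card_univ, Fintype.card_fin]

theorem Good.d_lt (H : Good n σ f) {v u : Fin (2*n)} (hu : u ≠ v) : H.d v u < 2*n - 1 := by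
  have hn := H.hn
  have h1 : ((σ v) ^ (H.d v u % (2*n-1))) (f v) = u := by
    rw [← H.orderOf_eq v, pow_mod_orderOf]
    exact H.d_spec hu
  have h2 := H.d_min hu h1
  have h3 : H.d v u % (2*n-1) < 2*n - 1 := Nat.mod_lt _ (by omega)
  omega

theorem Good.sq (H : Good n σ f) {v u : Fin (2*n)} (h : σ v (σ v u) = u) : u = v := by
  have hn := H.hn
  have h2m : ∀ m : ℕ, ((σ v) ^ (2*m)) u = u := by
    intro m
    induction m with
    | zero => simp
    | succ m ih =>
      have : 2*(m+1) = 2*m + 1 + 1 := by ring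
      rw [this, pow_succ, pow_succ, Equiv.Perm.mul_apply, Equiv.Perm.mul_apply, h, ih]
  have hN : ((σ v) ^ (2*n)) u = u := h2m n
  have hmod : 2*n % (2*n-1) = 1 := by
    rw [Nat.mod_eq_sub_mod (by omega)]
    have h9 : 2*n - (2*n-1) = 1 := by omega
    rw [h9, Nat.mod_eq_of_lt (by omega)]
  rw [← pow_mod_orderOf, H.orderOf_eq v, hmod, pow_one] at hN
  exact (H.hfix v u).mp hN

theorem Good.d_sigma (H : Good n σ f) {v u : Fin (2*n)} (hu : u ≠ v) (h2 : σ v u ≠ f v) :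
    H.d v (σ v u) = H.d v u + 1 := by
  have hsu : σ v u ≠ v := H.ne_v hu
  have hle : H.d v (σ v u) ≤ H.d v u + 1 := by
    apply H.d_min hsu
    rw [pow_succ', Equiv.Perm.mul_apply, H.d_spec hu]
  have hpos : H.d v (σ v u) ≠ 0 := fun h0 => h2 ((H.d_eq_zero hsu).mp h0)
  have hge : H.d v u ≤ H.d v (σ v u) - 1 := by
    apply H.d_min hu
    have hs := H.d_spec hsu
    have he : H.d v (σ v u) = (H.d v (σ v u) - 1) + 1 := by omega
    rw [he, pow_succ', Equiv.Perm.mul_apply] at hs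
    exact (σ v).injective hs
  omega

theorem Good.d_sigma' (H : Good n σ f) {v u : Fin (2*n)} (hu : u ≠ v) (h2 : u ≠ f v) :
    H.d v u = H.d v ((σ v)⁻¹ u) + 1 := by
  have := H.d_sigma (H.inv_ne_v hu) (u := (σ v)⁻¹ u) (by rwa [perm_apply_inv_self])
  rwa [perm_apply_inv_self] at this

theorem Good.sigma_ne_f (H : Good n σ f) {v u : Fin (2*n)} (hu : u ≠ v)
    (hodd : H.d v u % 2 = 1) : σ v u ≠ f v := by
  have hn := H.hn
  intro h
  have hfv : σ v (f v) ≠ f v := H.nfix (H.hf1 v)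
  have hpow : ((σ v) ^ (H.d v u + 1)) (f v) = f v := by
    rw [pow_succ', Equiv.Perm.mul_apply, H.d_spec hu, h]
  have hone : (σ v) ^ (H.d v u + 1) = 1 :=
    ((H.hcyc v).pow_eq_one_iff' hfv).mpr hpow
  have hdvd : orderOf (σ v) ∣ H.d v u + 1 := orderOf_dvd_of_pow_eq_one hone
  rw [H.orderOf_eq v] at hdvd
  have hle := Nat.le_of_dvd (by omega) hdvd
  have hlt := H.d_lt hu
  omega

/-- the matching involution on `Vt n`. -/
def Good.g (H : Good n σ f) : Vt n → Vt n := fun a =>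
  if _ : a.1.2 = f a.1.1 then ⟨(a.1.2, a.1.1), Ne.symm a.2⟩
  else if H.d a.1.1 a.1.2 % 2 = 1 then
    ⟨(a.1.1, σ a.1.1 a.1.2), Ne.symm (H.ne_v (Ne.symm a.2))⟩
  else ⟨(a.1.1, (σ a.1.1)⁻¹ a.1.2), Ne.symm (H.inv_ne_v (Ne.symm a.2))⟩

theorem Good.g_cross (H : Good n σ f) {v u : Fin (2*n)} {h : v ≠ u} (hc : u = f v) :
    H.g ⟨(v, u), h⟩ = ⟨(u, v), Ne.symm h⟩ := by
  rw [Good.g, dif_pos hc]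

theorem Good.g_odd (H : Good n σ f) {v u : Fin (2*n)} {h : v ≠ u} (hc : u ≠ f v)
    (ho : H.d v u % 2 = 1) :
    H.g ⟨(v, u), h⟩ = ⟨(v, σ v u), Ne.symm (H.ne_v (Ne.symm h))⟩ := by
  rw [Good.g, dif_neg hc, if_pos ho]

theorem Good.g_even (H : Good n σ f) {v u : Fin (2*n)} {h : v ≠ u} (hc : u ≠ f v)
    (ho : ¬ (H.d v u % 2 = 1)) :
    H.g ⟨(v, u), h⟩ = ⟨(v, (σ v)⁻¹ u), Ne.symm (H.inv_ne_v (Ne.symm h))⟩ := by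
  rw [Good.g, dif_neg hc, if_neg ho]

theorem Good.g_invol (H : Good n σ f) (a : Vt n) : H.g (H.g a) = a := by
  obtain ⟨⟨v, u⟩, hvu⟩ := a
  by_cases hc : u = f v
  · rw [H.g_cross hc, H.g_cross (by rw [hc, H.hf2])]
  · have hu : u ≠ v := Ne.symm hvu
    by_cases ho : H.d v u % 2 = 1
    · rw [H.g_odd hc ho]
      have h1 : σ v u ≠ f v := H.sigma_ne_f hu ho
      have h2 : H.d v (σ v u) = H.d v u + 1 := H.d_sigma hu h1
      rw [H.g_even h1 (by omega)]
      exact Subtype.ext (by simp)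
    · have hd0 : H.d v u ≠ 0 := fun h0 => hc ((H.d_eq_zero hu).mp h0)
      have hrec := H.d_sigma' hu hc
      have h1 : (σ v)⁻¹ u ≠ f v := by
        intro h
        have : H.d v ((σ v)⁻¹ u) = 0 := (H.d_eq_zero (H.inv_ne_v hu)).mpr h
        omega
      rw [H.g_even hc ho, H.g_odd h1 (by omega)]
      exact Subtype.ext (by simp)

theorem Good.g_adj (H : Good n σ f) (a : Vt n) : (matchGraph n σ).Adj a (H.g a) := by
  obtain ⟨⟨v, u⟩, hvu⟩ := a
  have hu : u ≠ v := Ne.symm hvu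
  rw [matchGraph, SimpleGraph.fromRel_adj]
  by_cases hc : u = f v
  · rw [H.g_cross hc]
    refine ⟨?_, Or.inl (Or.inl ⟨rfl, rfl⟩)⟩
    intro h
    exact hvu (congrArg (fun x => x.1.1) h)
  · by_cases ho : H.d v u % 2 = 1
    · rw [H.g_odd hc ho]
      refine ⟨?_, Or.inl (Or.inr ⟨rfl, rfl⟩)⟩
      intro h
      exact H.nfix hu (congrArg (fun x => x.1.2) h).symm
    · rw [H.g_even hc ho]
      refine ⟨?_, Or.inr (Or.inr ⟨rfl, by exact perm_apply_inv_self _ _⟩)⟩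
      intro h
      have h2 : u = (σ v)⁻¹ u := congrArg (fun x => x.1.2) h
      exact H.nfix hu (by rw [h2, perm_apply_inv_self]; exact h2)

theorem Good.g_cross_iff (H : Good n σ f) {u v : Fin (2*n)} (h : u ≠ v) :
    H.g ⟨(u, v), h⟩ = ⟨(v, u), h.symm⟩ ↔ f u = v := by
  constructor
  · intro hg
    by_contra hfu
    have hc : v ≠ f u := fun hh => hfu hh.symm
    by_cases ho : H.d u v % 2 = 1
    · rw [H.g_odd hc ho] at hg
      exact h (congrArg (fun x => x.1.1) hg)
    · rw [H.g_even hc ho] at hg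
      exact h (congrArg (fun x => x.1.1) hg)
  · intro hfu
    rw [H.g_cross hfu.symm]

/-- the perfect matching subgraph determined by `g`. -/
def Good.M0 (H : Good n σ f) : (matchGraph n σ).Subgraph where
  verts := Set.univ
  Adj a b := H.g a = b ∨ H.g b = a
  adj_sub := by
    rintro a b (rfl | rfl)
    · exact H.g_adj a
    · exact (H.g_adj b).symm
  edge_vert := fun _ => trivial
  symm := ⟨by rintro a b (rfl | rfl); exacts [Or.inr rfl, Or.inl rfl]⟩

theorem Good.M0_adj (H : Good n σ f) {a b : Vt n} : H.M0.Adj a b ↔ H.g a = b := by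
  constructor
  · rintro (rfl | rfl)
    · rfl
    · exact H.g_invol b
  · exact Or.inl

theorem Good.M0_perfect (H : Good n σ f) : H.M0.IsPerfectMatching := by
  rw [SimpleGraph.Subgraph.isPerfectMatching_iff]
  intro a
  refine ⟨H.g a, H.M0_adj.mpr rfl, fun b hb => ?_⟩
  exact (H.M0_adj.mp hb).symm

theorem Good.M0_cond (H : Good n σ f) :
    ∀ (u v : Fin (2*n)) (h : u ≠ v),
      (H.M0.Adj ⟨(u, v), h⟩ ⟨(v, u), h.symm⟩ ↔ f u = v) := by
  intro u v h
  rw [Good.M0_adj, H.g_cross_iff h]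

end Stmt8Aux

namespace Stmt8Aux
variable {n : ℕ} {σ : Fin (2*n) → Equiv.Perm (Fin (2*n))} {f : Fin (2*n) → Fin (2*n)}

theorem Good.nbr (H : Good n σ f) {v u : Fin (2*n)} (hvu : v ≠ u) (b : Vt n)
    (hb : (matchGraph n σ).Adj ⟨(v, u), hvu⟩ b) :
    b = ⟨(u, v), hvu.symm⟩ ∨ b = ⟨(v, σ v u), Ne.symm (H.ne_v (Ne.symm hvu))⟩ ∨
      b = ⟨(v, (σ v)⁻¹ u), Ne.symm (H.inv_ne_v (Ne.symm hvu))⟩ := by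
  rw [matchGraph, SimpleGraph.fromRel_adj] at hb
  obtain ⟨hne, hrel⟩ := hb
  obtain ⟨⟨b1, b2⟩, hb2⟩ := b
  simp only at hrel
  rcases hrel with (⟨h1, h2⟩ | ⟨h1, h2⟩) | (⟨h1, h2⟩ | ⟨h1, h2⟩)
  · exact Or.inl (Subtype.ext (by simp [← h1, ← h2]))
  · exact Or.inr (Or.inl (Subtype.ext (by simp [← h1, ← h2])))
  · exact Or.inl (Subtype.ext (by simp [h1, h2]))
  · refine Or.inr (Or.inr (Subtype.ext ?_))
    subst h1
    have : b2 = (σ b1)⁻¹ u := by rw [← h2, perm_inv_apply_self]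
    simp [this]

theorem Good.partner (H : Good n σ f) (M : (matchGraph n σ).Subgraph)
    (hM : M.IsPerfectMatching)
    (hcond : ∀ (u v : Fin (2*n)) (h : u ≠ v),
      (M.Adj ⟨(u, v), h⟩ ⟨(v, u), h.symm⟩ ↔ f u = v)) :
    ∀ a : Vt n, M.Adj a (H.g a) := by
  suffices h : ∀ k (a : Vt n), H.d a.1.1 a.1.2 = k → M.Adj a (H.g a) by
    intro a; exact h _ a rfl
  intro k
  induction k using Nat.strongRecOn with
  | _ k IH =>
  rintro ⟨⟨v, u⟩, hvu⟩ hk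
  simp only at hk
  have hu : u ≠ v := Ne.symm hvu
  by_cases hc : u = f v
  · rw [H.g_cross hc]
    exact (hcond v u hvu).mpr hc.symm
  · have hd0 : H.d v u ≠ 0 := fun h0 => hc ((H.d_eq_zero hu).mp h0)
    have hrec : H.d v u = H.d v ((σ v)⁻¹ u) + 1 := H.d_sigma' hu hc
    have hu' : (σ v)⁻¹ u ≠ v := H.inv_ne_v hu
    have hvu' : v ≠ (σ v)⁻¹ u := Ne.symm hu'
    have hIH : M.Adj ⟨(v, (σ v)⁻¹ u), hvu'⟩ (H.g ⟨(v, (σ v)⁻¹ u), hvu'⟩) :=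
      IH (H.d v ((σ v)⁻¹ u)) (by omega) _ rfl
    by_cases ho : H.d v u % 2 = 1
    · -- odd case: partner must be ⟨(v, σ v u)⟩
      rw [H.g_odd hc ho]
      obtain ⟨w, hw, hwu⟩ := SimpleGraph.Subgraph.isPerfectMatching_iff.mp hM ⟨(v, u), hvu⟩
      obtain ⟨w', hw', hwu'⟩ :=
        SimpleGraph.Subgraph.isPerfectMatching_iff.mp hM ⟨(v, (σ v)⁻¹ u), hvu'⟩
      have hga'_ne : H.g ⟨(v, (σ v)⁻¹ u), hvu'⟩ ≠ ⟨(v, u), hvu⟩ := by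
        by_cases hc' : (σ v)⁻¹ u = f v
        · rw [H.g_cross hc']
          intro h
          exact hu' (congrArg (fun x => x.1.1) h)
        · have ho' : ¬ (H.d v ((σ v)⁻¹ u) % 2 = 1) := by omega
          rw [H.g_even hc' ho']
          intro h
          have h2 : (σ v)⁻¹ ((σ v)⁻¹ u) = u := congrArg (fun x => x.1.2) h
          have h3 : σ v (σ v u) = u := by
            have := congrArg (fun x => σ v (σ v x)) h2
            simpa using this.symm
          exact hu (H.sq h3)
      have hnadj : ¬ M.Adj ⟨(v, u), hvu⟩ ⟨(v, (σ v)⁻¹ u), hvu'⟩ := by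
        intro hadj
        have e1 : H.g ⟨(v, (σ v)⁻¹ u), hvu'⟩ = w' := hwu' _ hIH
        have e2 : (⟨(v, u), hvu⟩ : Vt n) = w' := hwu' _ hadj.symm
        exact hga'_ne (e1.trans e2.symm)
      rcases H.nbr hvu w (M.adj_sub hw) with h1 | h1 | h1
      · exfalso
        rw [h1] at hw
        exact hc (((hcond v u hvu).mp hw).symm)
      · rw [← h1]; exact hw
      · exfalso
        rw [h1] at hw
        exact hnadj hw
    · -- even case: partner is ⟨(v, (σ v)⁻¹ u)⟩, matched via IH
      have hu'f : (σ v)⁻¹ u ≠ f v := by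
        intro h
        have := (H.d_eq_zero hu').mpr h
        omega
      have ho' : H.d v ((σ v)⁻¹ u) % 2 = 1 := by omega
      rw [H.g_odd hu'f ho'] at hIH
      have he : (⟨(v, σ v ((σ v)⁻¹ u)), Ne.symm (H.ne_v (Ne.symm hvu'))⟩ : Vt n)
          = ⟨(v, u), hvu⟩ := Subtype.ext (by simp)
      rw [he] at hIH
      rw [H.g_even hc ho]
      exact hIH.symm

end Stmt8Aux


/-- A perfect matching `M` of `K_{2n}` is encoded as a fixed-point-free involution `f`.
It extends to a unique perfect matching `M*` of `D` whose crossing edges are exactly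
the edges `{[u,v],[v,u]}` with `{u,v} ∈ M`; inside each cycle `C^v` this matching is
the unique perfect matching of the path obtained by deleting the vertex `[v, f v]`. -/
theorem stmt8 (n : ℕ) (hn : 2 ≤ n) (σ : Fin (2*n) → Equiv.Perm (Fin (2*n)))
    (hfix : ∀ v u, σ v u = u ↔ u = v) (hcyc : ∀ v, (σ v).IsCycle)
    (f : Fin (2*n) → Fin (2*n)) (hf1 : ∀ v, f v ≠ v) (hf2 : ∀ v, f (f v) = v) :
    ∃! M : (matchGraph n σ).Subgraph, M.IsPerfectMatching ∧
      ∀ (u v : Fin (2*n)) (h : u ≠ v),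
        (M.Adj ⟨(u, v), h⟩ ⟨(v, u), h.symm⟩ ↔ f u = v) := by
  have H : Stmt8Aux.Good n σ f := ⟨hn, hfix, hcyc, hf1, hf2⟩
  refine ⟨H.M0, ⟨H.M0_perfect, H.M0_cond⟩, ?_⟩
  rintro M ⟨hMp, hMc⟩
  have key : ∀ a, M.Adj a (H.g a) := H.partner M hMp hMc
  apply SimpleGraph.Subgraph.ext
  · exact hMp.2.verts_eq_univ
  · funext a b
    apply propext
    rw [Stmt8Aux.Good.M0_adj]
    constructor
    · intro h
      obtain ⟨w, hw, huniq⟩ := SimpleGraph.Subgraph.isPerfectMatching_iff.mp hMp a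
      rw [huniq _ (key a), huniq b h]
    · rintro rfl
      exact key a
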